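/- Define f_A(p,q) = (d + bγe^{q})p + ae^{-q} + b(αβ - γδ)e^{q} + cγ for A = aX+bY+cZ+dT, with γ ≠ 0 fixed. Then the standard Poisson bracket satisfies {f_A, f_B}(p,q) = f_{[A,B]}(p,q) for all A, B in the real diamond Lie algebra, where {u,v} = ∂_p u · ∂_q v - ∂_q u · ∂_p v. -/

import Mathlib

/-- The standard Poisson bracket on ℝ²: {u,v} = ∂_p u · ∂_q v - ∂_q u · ∂_p v. -/
noncomputable def poisson (u v : ℝ × ℝ → ℝ) : ℝ × ℝ → ℝ :=
  fun w =>
    deriv (fun p => u (p, w.2)) w.1 * deriv (fun q => v (w.1, q)) w.2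
      - deriv (fun q => u (w.1, q)) w.2 * deriv (fun p => v (p, w.2)) w.1

/-- The Hamiltonian function of A = aX + bY + cZ + dT on the orbit Ω⁵:
f_A(p,q) = (d + bγe^{q})p + ae^{-q} + b(αβ - γδ)e^{q} + cγ. -/
noncomputable def fA5 (α β γ δ a b c d : ℝ) : ℝ × ℝ → ℝ :=
  fun w => (d + b * γ * Real.exp w.2) * w.1 + a * Real.exp (-w.2)
      + b * (α * β - γ * δ) * Real.exp w.2 + c * γ

lemma derivP (α β γ δ a b c d q : ℝ) (p : ℝ) :
    deriv (fun p => fA5 α β γ δ a b c d (p, q)) p = d + b * γ * Real.exp q := by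
  simp only [fA5]
  rw [show (fun p => (d + b * γ * Real.exp q) * p + a * Real.exp (-q)
      + b * (α * β - γ * δ) * Real.exp q + c * γ)
    = (fun p : ℝ => (d + b * γ * Real.exp q) * p
      + (a * Real.exp (-q) + b * (α * β - γ * δ) * Real.exp q + c * γ)) from by
      funext p; ring]
  rw [deriv_add_const, deriv_const_mul _ differentiable_id.differentiableAt]
  simp

lemma derivQ (α β γ δ a b c d p : ℝ) (q : ℝ) :
    deriv (fun q => fA5 α β γ δ a b c d (p, q)) q
      = b * γ * Real.exp q * p - a * Real.exp (-q) + b * (α * β - γ * δ) * Real.exp q := by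
  simp only [fA5]
  have h1 : HasDerivAt (fun q : ℝ => Real.exp q) (Real.exp q) q := Real.hasDerivAt_exp q
  have h2 : HasDerivAt (fun q : ℝ => Real.exp (-q)) (-Real.exp (-q)) q := by
    simpa [Function.comp_def] using (Real.hasDerivAt_exp (-q)).comp q (hasDerivAt_neg q)
  have : HasDerivAt (fun q => (d + b * γ * Real.exp q) * p + a * Real.exp (-q)
      + b * (α * β - γ * δ) * Real.exp q + c * γ)
      (b * γ * Real.exp q * p - a * Real.exp (-q) + b * (α * β - γ * δ) * Real.exp q) q := by
    have := ((((h1.const_mul (b * γ)).const_add d).mul_const p).add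
      (h2.const_mul a)).add (h1.const_mul (b * (α * β - γ * δ)))
    simpa [mul_comm, mul_assoc, mul_left_comm, sub_eq_add_neg, mul_neg] using this.add_const (c * γ)
  exact this.deriv

theorem poisson_fA5 (α β γ δ : ℝ) (hγ : γ ≠ 0)
    (a b c d a' b' c' d' : ℝ) :
    poisson (fA5 α β γ δ a b c d) (fA5 α β γ δ a' b' c' d')
      = fA5 α β γ δ (a * d' - d * a') (d * b' - d' * b) (a * b' - a' * b) 0 := by
  funext w
  simp only [poisson, derivP, derivQ]
  simp only [fA5, Real.exp_neg]
  have h := Real.exp_ne_zero w.2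
  field_simp
  ring
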